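/- For vectors a,b of length n and c of length m over an alphabet of size q, d_E(ac, b) ≥ d_E(a,b)/2. -/

import Mathlib

/-- A single edit step: insert or delete one symbol. -/
def EditStep {α : Type*} (a b : List α) : Prop :=
  (∃ i x, b = a.insertIdx i x) ∨ (∃ i x, a = b.insertIdx i x)

/-- Edit distance: minimum number of insertions and deletions transforming `a` into `b`. -/
noncomputable def editDist {α : Type*} (a b : List α) : ℕ :=
  sInf {n : ℕ | ∃ f : ℕ → List α, f 0 = a ∧ f n = b ∧ ∀ i < n, EditStep (f i) (f (i + 1))}

section aux
variable {α : Type*}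

lemma editDist_le_of_chain {a b : List α} {n : ℕ} (f : ℕ → List α)
    (h0 : f 0 = a) (hn : f n = b) (hst : ∀ i < n, EditStep (f i) (f (i + 1))) :
    editDist a b ≤ n :=
  Nat.sInf_le ⟨f, h0, hn, hst⟩

/-- Chain: delete all of `a`, then insert all of `b`. -/
lemma editDist_set_nonempty (a b : List α) :
    {n : ℕ | ∃ f : ℕ → List α, f 0 = a ∧ f n = b ∧ ∀ i < n, EditStep (f i) (f (i + 1))}.Nonempty := by
  refine ⟨a.length + b.length, fun i => if i ≤ a.length then a.drop i else b.take (i - a.length),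
    ?_, ?_, ?_⟩
  · simp
  · dsimp only
    rcases Nat.eq_zero_or_pos b.length with h | h
    · simp [h, List.eq_nil_of_length_eq_zero h]
    · rw [if_neg (by omega)]
      simp
  · intro i hi
    dsimp only
    by_cases h : i < a.length
    · rw [if_pos (by omega), if_pos (by omega)]
      right
      exact ⟨0, a[i], by rw [List.insertIdx_zero, ← List.drop_eq_getElem_cons h]⟩
    · have hij : i - a.length < b.length := by omega
      have h1 : (if i ≤ a.length then a.drop i else b.take (i - a.length))
          = b.take (i - a.length) := by
        rcases Nat.lt_or_ge a.length i with h' | h'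
        · rw [if_neg (by omega)]
        · have : i = a.length := by omega
          simp [this]
      rw [h1, if_neg (by omega)]
      left
      refine ⟨i - a.length, b.get ⟨i - a.length, hij⟩, ?_⟩
      have hlen : (b.take (i - a.length)).length = i - a.length := by
        simp [Nat.min_eq_left hij.le]
      have key := List.insertIdx_length_self (l := b.take (i - a.length)) (x := b.get ⟨i - a.length, hij⟩)
      rw [hlen] at key
      have h3 : i + 1 - a.length = (i - a.length) + 1 := by omega
      rw [h3, List.take_succ, key]
      have h4 : b[i - a.length]? = some (b.get ⟨i - a.length, hij⟩) :=
        List.getElem?_eq_getElem hij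
      rw [h4]
      rfl

lemma exists_min_chain (a b : List α) :
    ∃ f : ℕ → List α, f 0 = a ∧ f (editDist a b) = b ∧
      ∀ i < editDist a b, EditStep (f i) (f (i + 1)) :=
  Nat.sInf_mem (editDist_set_nonempty a b)

lemma editDist_triangle (a b c : List α) :
    editDist a c ≤ editDist a b + editDist b c := by
  obtain ⟨f, hf0, hfk, hfst⟩ := exists_min_chain a b
  obtain ⟨g, hg0, hgl, hgst⟩ := exists_min_chain b c
  set k := editDist a b
  set l := editDist b c
  refine editDist_le_of_chain (fun i => if i ≤ k then f i else g (i - k)) ?_ ?_ ?_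
  · simp [hf0]
  · 
    rcases Nat.eq_zero_or_pos l with h | h
    · simp only [h, Nat.add_zero, if_pos le_rfl, hfk]
      rw [← hg0, ← h, hgl]
    · rw [if_neg (by omega)]
      simpa using hgl
  · intro i hi
    by_cases h : i < k
    · rw [if_pos (by omega), if_pos (by omega)]
      exact hfst i h
    · have h1 : (if i ≤ k then f i else g (i - k)) = g (i - k) := by
        rcases Nat.lt_or_ge k i with h' | h'
        · rw [if_neg (by omega)]
        · have : i = k := by omega
          rw [this, if_pos le_rfl, hfk, ← hg0]
          simp
      rw [h1, if_neg (by omega)]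
      have : i + 1 - k = (i - k) + 1 := by omega
      rw [this]
      exact hgst (i - k) (by omega)

lemma editStep_length {a b : List α} (h : EditStep a b) :
    a.length ≤ b.length + 1 ∧ b.length ≤ a.length + 1 := by
  rcases h with ⟨i, x, rfl⟩ | ⟨i, x, rfl⟩
  · have h1 := List.length_le_length_insertIdx (l := a) (x := x) (i := i)
    have h2 := List.length_insertIdx_le_succ (l := a) (x := x) (i := i)
    omega
  · have h1 := List.length_le_length_insertIdx (l := b) (x := x) (i := i)
    have h2 := List.length_insertIdx_le_succ (l := b) (x := x) (i := i)
    omega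

lemma chain_length_bound {n : ℕ} (f : ℕ → List α)
    (hst : ∀ i < n, EditStep (f i) (f (i + 1))) :
    (f 0).length ≤ (f n).length + n := by
  induction n with
  | zero => simp
  | succ k ih =>
    have h1 := ih (fun i hi => hst i (by omega))
    have h2 := (editStep_length (hst k (by omega))).1
    omega

lemma length_sub_le_editDist (a b : List α) : a.length ≤ b.length + editDist a b := by
  obtain ⟨f, hf0, hfk, hfst⟩ := exists_min_chain a b
  have := chain_length_bound f hfst
  rw [hf0, hfk] at this
  exact this

lemma editDist_append_right (a c : List α) : editDist a (a ++ c) ≤ c.length := by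
  refine editDist_le_of_chain (fun i => a ++ c.take i) (by simp) (by simp) ?_
  intro i hi
  left
  refine ⟨a.length + i, c.get ⟨i, hi⟩, ?_⟩
  have hlen : (a ++ c.take i).length = a.length + i := by
    simp [Nat.min_eq_left hi.le]
  have key := List.insertIdx_length_self (l := a ++ c.take i) (x := c.get ⟨i, hi⟩)
  rw [hlen] at key
  rw [key, List.append_assoc]
  congr 1
  rw [List.take_succ, List.getElem?_eq_getElem hi]
  rfl

end aux

/-- `d_E(ac, b) ≥ d_E(a,b)/2`. -/
theorem editDist_div_two_le_editDist_append (q n m : ℕ) (a b c : List (Fin q))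
    (ha : a.length = n) (hb : b.length = n) (hc : c.length = m) :
    editDist a b / 2 ≤ editDist (a ++ c) b := by
  have h1 : editDist a b ≤ editDist a (a ++ c) + editDist (a ++ c) b :=
    editDist_triangle _ _ _
  have h2 : editDist a (a ++ c) ≤ m := by
    have := editDist_append_right a c
    omega
  have h3 : m ≤ editDist (a ++ c) b := by
    have := length_sub_le_editDist (a ++ c) b
    simp only [List.length_append, ha, hb, hc] at this
    omega
  omega
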